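/- Let $\{a_n\}_{n=1}^\infty$ be a sequence of positive real numbers with $\lim_{n\to\infty} a_n = 0$, and let $r > 1$. Then either there exists $C > 0$ such that $a_n < C r^{-n}$ for all $n$, or there exists a strictly increasing sequence of indices $\{n_k\}_{k=1}^\infty$ (with each $n_k \geq 2$) such that for every $k$, $a_{n_k} > a_{n_k+1}$ and $r\, a_{n_k} \geq a_{n_k - 1}$. -/

import Mathlib

open Filter

/-- dichotomy for positive sequences tending to zero. -/
theorem stmt0 (a : ℕ → ℝ) (r : ℝ) (hpos : ∀ n, 1 ≤ n → 0 < a n)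
    (hlim : Tendsto a atTop (nhds 0)) (hr : 1 < r) :
    (∃ C > 0, ∀ n, 1 ≤ n → a n < C / r ^ n) ∨
    (∃ m : ℕ → ℕ, StrictMono m ∧ (∀ k, 2 ≤ m k) ∧
      ∀ k, a (m k) > a (m k + 1) ∧ r * a (m k) ≥ a (m k - 1)) := by
  have hr0 : (0:ℝ) < r := lt_trans one_pos hr
  set S : Set ℕ := {n | 2 ≤ n ∧ a n > a (n+1) ∧ r * a n ≥ a (n-1)} with hSdef
  by_cases hinf : S.Infinite
  · right
    exact ⟨Nat.nth S, Nat.nth_strictMono hinf,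
      fun k => (Nat.nth_mem_of_infinite hinf k).1,
      fun k => (Nat.nth_mem_of_infinite hinf k).2⟩
  · left
    rw [Set.not_infinite] at hinf
    obtain ⟨B, hB⟩ := hinf.bddAbove
    set N := max (B+1) 2 with hNdef
    have hN2 : 2 ≤ N := le_max_right _ _
    have hnotS : ∀ n, N ≤ n → ¬ (a n > a (n+1) ∧ r * a n ≥ a (n-1)) := by
      intro n hn hc
      have hmem : n ∈ S := ⟨by omega, hc.1, hc.2⟩
      have := hB hmem
      omega
    -- Key claim: geometric drop everywhere beyond N
    have key : ∀ n, N ≤ n → r * a n < a (n-1) := by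
      intro n hn
      by_contra h
      push_neg at h
      have mono : ∀ k, a (n+k) ≤ a (n+k+1) := by
        intro k
        induction k with
        | zero =>
          by_contra h2
          push_neg at h2
          exact hnotS n hn ⟨by simpa using h2, by simpa using h⟩
        | succ k ih =>
          by_contra h2
          push_neg at h2
          have h3 := hnotS (n+k+1) (by omega)
          have h4 : r * a (n+k+1) ≥ a (n+k+1-1) := by
            have hk : n+k+1-1 = n+k := by omega
            rw [hk]
            have hpk : 0 < a (n+k) := hpos _ (by omega)
            nlinarith
          exact h3 ⟨h2, h4⟩
      have chain : ∀ k, a n ≤ a (n+k) := by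
        intro k
        induction k with
        | zero => simp
        | succ k ih => exact le_trans ih (mono k)
      have hpn : 0 < a n := hpos _ (by omega)
      have hev : ∀ᶠ m in atTop, a m < a n := hlim.eventually (gt_mem_nhds hpn)
      obtain ⟨m, hm, hm2⟩ := (hev.and (eventually_ge_atTop n)).exists
      have : a n ≤ a m := by
        have : a n ≤ a (n + (m - n)) := chain (m - n)
        rwa [Nat.add_sub_cancel' hm2] at this
      linarith
    -- geometric decay
    have geo : ∀ k, a (N + k) * r ^ (N + k) < a (N-1) * r ^ (N-1) := by
      intro k
      induction k with
      | zero =>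
        obtain ⟨M, hM⟩ : ∃ M, N = M + 1 := ⟨N-1, by omega⟩
        have h1 := key N le_rfl
        rw [hM] at h1 ⊢
        simp only [Nat.add_zero, Nat.add_sub_cancel] at h1 ⊢
        have hp : (0:ℝ) < r ^ M := pow_pos hr0 _
        have hre : r ^ (M+1) = r * r ^ M := by ring
        rw [hre]
        nlinarith
      | succ k ih =>
        have h1 := key (N+k+1) (by omega)
        have hk : N+k+1-1 = N+k := by omega
        rw [hk] at h1
        have hp : (0:ℝ) < r ^ (N+k) := pow_pos hr0 _
        calc a (N + (k+1)) * r ^ (N + (k+1)) = (r * a (N+k+1)) * r ^ (N+k) := by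
              rw [show N + (k+1) = (N+k)+1 from rfl]; ring
          _ < a (N+k) * r ^ (N+k) := by nlinarith
          _ < a (N-1) * r ^ (N-1) := ih
    refine ⟨1 + ∑ i ∈ Finset.range (N+1), |a i| * r ^ i, ?_, ?_⟩
    · have : (0:ℝ) ≤ ∑ i ∈ Finset.range (N+1), |a i| * r ^ i :=
        Finset.sum_nonneg fun i _ => mul_nonneg (abs_nonneg _) (pow_pos hr0 i).le
      linarith
    · intro n hn
      have hpn : (0:ℝ) < r ^ n := pow_pos hr0 n
      rw [lt_div_iff₀ hpn]
      have hterm : ∀ j, j ∈ Finset.range (N+1) →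
          |a j| * r ^ j ≤ ∑ i ∈ Finset.range (N+1), |a i| * r ^ i := by
        intro j hj
        exact Finset.single_le_sum
          (fun i _ => mul_nonneg (abs_nonneg _) (pow_pos hr0 i).le) hj
      by_cases hcase : n ≤ N
      · have h1 : a n * r ^ n ≤ |a n| * r ^ n :=
          mul_le_mul_of_nonneg_right (le_abs_self _) hpn.le
        have h2 := hterm n (Finset.mem_range.mpr (by omega))
        linarith
      · have hk : n = N + (n - N) := by omega
        have h1 : a n * r ^ n < a (N-1) * r ^ (N-1) := by
          rw [hk]; exact geo (n - N)
        have h2 : a (N-1) * r ^ (N-1) ≤ |a (N-1)| * r ^ (N-1) :=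
          mul_le_mul_of_nonneg_right (le_abs_self _) (pow_pos hr0 _).le
        have h3 := hterm (N-1) (Finset.mem_range.mpr (by omega))
        linarith
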